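/- Let A be a finite alphabet, n ≥ 1, and let w₁, w₂ be nonempty words over A. Suppose that for every nonempty word w' over A with |w'| ≤ n, the three counts #(w₁, w'), #(w₂, w'), and #(w₁w₂, w') are all congruent modulo 2 (where w₁w₂ denotes concatenation). Then for every nonempty word w' with |w'| ≤ n, all three counts #(w₁, w'), #(w₂, w'), and #(w₁w₂, w') are even. -/

import Mathlib

/-- `#(w, w')`: the number of ways in which `w'` occurs as a subsequence of `w`,
i.e. the number of strictly increasing tuples of indices
`0 ≤ x₀ < x₁ < … < x_{|w'|−1} < |w|` with `w(xᵢ) = w'(i)` for all `i`. -/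
noncomputable def subseqCount {α : Type*} (w w' : List α) : ℕ :=
  Nat.card {f : Fin w'.length → Fin w.length //
    StrictMono f ∧ ∀ i : Fin w'.length, w.get (f i) = w'.get i}

namespace SubseqAux

variable {α : Type*}

abbrev Sub (w w' : List α) := {f : Fin w'.length → Fin w.length //
    StrictMono f ∧ ∀ i : Fin w'.length, w.get (f i) = w'.get i}

lemma sc_def (w w' : List α) : subseqCount w w' = Nat.card (Sub w w') := rfl

lemma get_cons_ne_zero (a : α) (w : List α) (x : Fin (w.length + 1)) (h : x ≠ 0) :
    (a :: w).get x = w.get (x.pred h) := by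
  have hx : (x : ℕ) ≠ 0 := fun h' => h (Fin.ext h')
  rcases Nat.exists_eq_succ_of_ne_zero hx with ⟨k, hk⟩
  simp [List.get_eq_getElem, Fin.coe_pred, hk]

lemma sc_nil_right (w : List α) : subseqCount w [] = 1 := by
  have : Unique (Sub w ([] : List α)) := by
    refine ⟨⟨⟨fun i => i.elim0, fun i => i.elim0, fun i => i.elim0⟩⟩, ?_⟩
    rintro ⟨f, hf⟩
    ext i
    exact i.elim0
  rw [sc_def]
  exact Nat.card_unique

lemma sc_nil_left (b : α) (w' : List α) : subseqCount ([] : List α) (b :: w') = 0 := by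
  have : IsEmpty (Sub ([] : List α) (b :: w')) := by
    refine ⟨fun f => ?_⟩
    exact (f.1 ⟨0, Nat.succ_pos _⟩).elim0
  rw [sc_def]
  exact Nat.card_of_isEmpty

/-- shift by one: embed index functions into `w` as index functions into `a :: w`. -/
def shiftSub (a : α) (w w' : List α) (g : Sub w w') : Sub (a :: w) w' :=
  ⟨fun i => (g.1 i).succ, fun i j hij => Fin.succ_lt_succ_iff.mpr (g.2.1 hij),
    fun i => by
      have := g.2.2 i
      simpa using this⟩

def consSub (a : α) (w w' : List α) (g : Sub w w') : Sub (a :: w) (a :: w') :=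
  ⟨Fin.cases (0 : Fin (w.length + 1)) (fun i => (g.1 i).succ), by
      intro i j hij
      induction j using Fin.cases with
      | zero => exact absurd hij (Fin.not_lt_zero _)
      | succ j =>
        induction i using Fin.cases with
        | zero => simpa using Fin.succ_pos _
        | succ i =>
          simp only [Fin.cases_succ]
          exact Fin.succ_lt_succ_iff.mpr (g.2.1 (by simpa using hij)), by
      intro i
      induction i using Fin.cases with
      | zero => simp
      | succ i =>
        simp only [Fin.cases_succ]
        have := g.2.2 i
        simpa using this⟩


lemma sc_cons_ne {a b : α} (hab : a ≠ b) (w w' : List α) :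
    subseqCount (a :: w) (b :: w') = subseqCount w (b :: w') := by
  rw [sc_def, sc_def]
  refine (Nat.card_eq_of_bijective (shiftSub a w (b :: w')) ⟨?_, ?_⟩).symm
  · rintro ⟨g, hg⟩ ⟨g', hg'⟩ hgg'
    have hfun : ∀ i, (g i).succ = (g' i).succ :=
      fun i => congrFun (congrArg Subtype.val hgg') i
    exact Subtype.ext (funext fun i => Fin.succ_injective _ (hfun i))
  · rintro ⟨f, hmono, hval⟩
    have hne : ∀ i, f i ≠ (0 : Fin (w.length + 1)) := by
      intro i h0
      rcases Fin.eq_zero_or_eq_succ i with rfl | ⟨j, rfl⟩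
      · apply hab
        have := hval (0 : Fin (w'.length + 1))
        rw [h0] at this
        simpa using this
      · have h01 : f (0 : Fin (w'.length + 1)) < f j.succ := hmono (Fin.succ_pos j)
        rw [h0] at h01
        exact absurd h01 (Fin.not_lt_zero _)
    refine ⟨⟨fun i => (f i).pred (hne i), ?_, ?_⟩, ?_⟩
    · intro i j hij
      exact Fin.pred_lt_pred_iff.mpr (hmono hij)
    · intro i
      have := hval i
      rwa [get_cons_ne_zero a w (f i) (hne i)] at this
    · apply Subtype.ext
      funext i
      exact Fin.succ_pred (f i) (hne i)

lemma sc_cons_eq (a : α) (w w' : List α) :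
    subseqCount (a :: w) (a :: w') = subseqCount w w' + subseqCount w (a :: w') := by
  rw [sc_def, sc_def, sc_def, ← Nat.card_sum]
  refine (Nat.card_eq_of_bijective
    (Sum.elim (consSub a w w') (shiftSub a w (a :: w'))) ⟨?_, ?_⟩).symm
  · rintro (⟨g, hg⟩ | ⟨g, hg⟩) (⟨g', hg'⟩ | ⟨g', hg'⟩) hgg'
    · refine congrArg Sum.inl (Subtype.ext (funext fun i => ?_))
      have hfun : (consSub a w w' ⟨g, hg⟩).1 i.succ = (consSub a w w' ⟨g', hg'⟩).1 i.succ :=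
        congrFun (congrArg Subtype.val hgg') i.succ
      simp only [consSub, Fin.cases_succ] at hfun
      exact Fin.succ_injective _ hfun
    · have h0 := congrFun (congrArg Subtype.val hgg') (0 : Fin (w'.length + 1))
      exact absurd h0.symm (Fin.succ_ne_zero _)
    · have h0 := congrFun (congrArg Subtype.val hgg') (0 : Fin (w'.length + 1))
      exact absurd h0 (Fin.succ_ne_zero _)
    · refine congrArg Sum.inr (Subtype.ext (funext fun i => ?_))
      have hfun : (g i).succ = (g' i).succ := congrFun (congrArg Subtype.val hgg') i
      exact Fin.succ_injective _ hfun
  · rintro ⟨f, hmono, hval⟩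
    by_cases h0 : f (0 : Fin (w'.length + 1)) = (0 : Fin (w.length + 1))
    · have hne : ∀ i : Fin w'.length, f i.succ ≠ (0 : Fin (w.length + 1)) := by
        intro i hi
        have hlt : f (0 : Fin (w'.length + 1)) < f i.succ := hmono (Fin.succ_pos i)
        rw [h0, hi] at hlt
        exact absurd hlt (lt_irrefl _)
      refine ⟨Sum.inl ⟨fun i => (f i.succ).pred (hne i), ?_, ?_⟩, ?_⟩
      · intro i j hij
        exact Fin.pred_lt_pred_iff.mpr (hmono (Fin.succ_lt_succ_iff.mpr hij))
      · intro i
        have := hval i.succ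
        rw [get_cons_ne_zero a w (f i.succ) (hne i)] at this
        simpa using this
      · apply Subtype.ext
        funext i
        induction i using Fin.cases with
        | zero => simpa [consSub] using h0.symm
        | succ i => simpa [consSub] using Fin.succ_pred (f i.succ) (hne i)
    · have hne : ∀ i, f i ≠ (0 : Fin (w.length + 1)) := by
        intro i hi
        rcases Fin.eq_zero_or_eq_succ i with rfl | ⟨j, rfl⟩
        · exact h0 hi
        · have hlt : f (0 : Fin (w'.length + 1)) < f j.succ := hmono (Fin.succ_pos j)
          rw [hi] at hlt
          exact absurd hlt (Fin.not_lt_zero _)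
      refine ⟨Sum.inr ⟨fun i => (f i).pred (hne i), ?_, ?_⟩, ?_⟩
      · intro i j hij
        exact Fin.pred_lt_pred_iff.mpr (hmono hij)
      · intro i
        have := hval i
        rwa [get_cons_ne_zero a w (f i) (hne i)] at this
      · apply Subtype.ext
        funext i
        exact Fin.succ_pred (f i) (hne i)


lemma sc_append (w₂ : List α) (w₁ w' : List α) :
    subseqCount (w₁ ++ w₂) w' =
      ∑ k ∈ Finset.range (w'.length + 1),
        subseqCount w₁ (w'.take k) * subseqCount w₂ (w'.drop k) := by
  classical
  induction w₁ generalizing w' with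
  | nil =>
    cases w' with
    | nil => simp [sc_nil_right]
    | cons b v =>
      rw [List.nil_append, Finset.sum_range_succ']
      simp [List.take_succ_cons, sc_nil_left, sc_nil_right]
  | cons a t ih =>
    cases w' with
    | nil => simp [sc_nil_right]
    | cons b v =>
      by_cases hab : a = b
      · subst hab
        rw [List.cons_append, sc_cons_eq, ih v, ih (a :: v),
          Finset.sum_range_succ'
            (fun k => subseqCount (a :: t) ((a :: v).take k) * subseqCount w₂ ((a :: v).drop k)),
          Finset.sum_range_succ'
            (fun k => subseqCount t ((a :: v).take k) * subseqCount w₂ ((a :: v).drop k))]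
        simp only [List.take_succ_cons, List.drop_succ_cons, List.take_zero, List.drop_zero,
          sc_cons_eq, sc_nil_right, one_mul, add_mul, Finset.sum_add_distrib,
          List.length_cons]
        ring
      · rw [List.cons_append, sc_cons_ne hab, ih (b :: v),
          Finset.sum_range_succ'
            (fun k => subseqCount (a :: t) ((b :: v).take k) * subseqCount w₂ ((b :: v).drop k)),
          Finset.sum_range_succ'
            (fun k => subseqCount t ((b :: v).take k) * subseqCount w₂ ((b :: v).drop k))]
        simp only [List.take_succ_cons, List.drop_succ_cons, List.take_zero, List.drop_zero,
          sc_cons_ne hab, sc_nil_right, one_mul]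

end SubseqAux

/-- If for every nonempty word `w'` of length at most `n` the three counts
`#(w₁, w')`, `#(w₂, w')` and `#(w₁w₂, w')` are congruent modulo 2, then all three
counts are even for every such `w'`. -/
theorem subseqCounts_even_of_congruent {α : Type*} (n : ℕ) (hn : 1 ≤ n)
    (w₁ w₂ : List α) (hw₁ : w₁ ≠ []) (hw₂ : w₂ ≠ [])
    (h : ∀ w' : List α, w' ≠ [] → w'.length ≤ n →
      subseqCount w₁ w' % 2 = subseqCount w₂ w' % 2 ∧
      subseqCount w₂ w' % 2 = subseqCount (w₁ ++ w₂) w' % 2) :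
    ∀ w' : List α, w' ≠ [] → w'.length ≤ n →
      2 ∣ subseqCount w₁ w' ∧ 2 ∣ subseqCount w₂ w' ∧ 2 ∣ subseqCount (w₁ ++ w₂) w' := by
  classical
  have key : ∀ m : ℕ, ∀ w' : List α, w'.length ≤ m → w' ≠ [] → w'.length ≤ n →
      2 ∣ subseqCount w₁ w' := by
    intro m
    induction m with
    | zero =>
      intro w' hlen hne _
      cases w' with
      | nil => exact absurd rfl hne
      | cons b v => simp at hlen
    | succ m ih =>
      intro w' hlen hne hn'
      obtain ⟨h1, h2⟩ := h w' hne hn'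
      have hLpos : 0 < w'.length := List.length_pos_iff.mpr hne
      have hsplit : subseqCount (w₁ ++ w₂) w' =
          subseqCount w₂ w' +
          (∑ k ∈ Finset.Ico 1 w'.length,
            subseqCount w₁ (w'.take k) * subseqCount w₂ (w'.drop k)) +
          subseqCount w₁ w' := by
        rw [SubseqAux.sc_append, Finset.range_eq_Ico,
          Finset.sum_Ico_succ_top (Nat.zero_le _),
          Finset.sum_eq_sum_Ico_succ_bot hLpos]
        simp [List.take_length, List.drop_length, SubseqAux.sc_nil_right]
      have hmid : 2 ∣ ∑ k ∈ Finset.Ico 1 w'.length,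
          subseqCount w₁ (w'.take k) * subseqCount w₂ (w'.drop k) := by
        refine Finset.dvd_sum ?_
        intro k hk
        rw [Finset.mem_Ico] at hk
        have hlt : (w'.take k).length = k := by rw [List.length_take]; omega
        have hne' : w'.take k ≠ [] := by
          intro hnil
          rw [hnil] at hlt
          simp at hlt
          omega
        refine Dvd.dvd.mul_right (ih _ ?_ hne' ?_) _ <;> rw [hlt] <;> omega
      obtain ⟨q, hq⟩ := hmid
      omega
  intro w' hne hn'
  have d1 := key w'.length w' le_rfl hne hn'
  obtain ⟨h1, h2⟩ := h w' hne hn'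
  refine ⟨d1, ?_, ?_⟩ <;> omega
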